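/- arXiv:2311.12496 — 9 statements merged into one kernel-verified Lean document; each statement's English description precedes it below -/
import Mathlib

section
/- If α_ex : W → E is a global minimizer of the ex-ante worst-case functional F, then for every message w ∈ W with μ₀(C(w)) > 0 the point α_ex(w) lies on the line segment joining α_pool and α_{C(w)}, i.e. α_ex(w) ∈ segment(α_pool, α_{C(w)}). -/
open MeasureTheory


variable {L : ℕ}
local notation "E" => EuclideanSpace ℝ (Fin L)

lemma seg_complete (x y : E) : IsComplete (segment ℝ x y) := by
  have h : IsCompact (segment ℝ x y) := by
    rw [segment_eq_image]
    exact isCompact_Icc.image (by continuity)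
  exact h.isClosed.isComplete

-- integrability of identity
lemma int_id (ν : Measure E) [IsFiniteMeasure ν]
    (h2 : Integrable (fun t => ‖t‖ ^ 2) ν) : Integrable (fun t : E => t) ν := by
  have hg : Integrable (fun t : E => 1 + ‖t‖ ^ 2) ν := (integrable_const 1).add h2
  refine hg.mono' measurable_id.aestronglyMeasurable ?_
  refine Filter.Eventually.of_forall fun t => ?_
  have : ‖t‖ ≤ 1 + ‖t‖ ^ 2 := by nlinarith [norm_nonneg t, sq_nonneg (‖t‖ - 1)]
  simpa using this

lemma int_normsq (ν : Measure E) [IsFiniteMeasure ν]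
    (h2 : Integrable (fun t => ‖t‖ ^ 2) ν) (a : E) :
    Integrable (fun t => ‖t - a‖ ^ 2) ν := by
  have hg : Integrable (fun t : E => ‖t‖^2 + (2*‖a‖) * ‖t‖ + ‖a‖^2) ν := by
    have h1 : Integrable (fun t : E => ‖t‖) ν := (int_id ν h2).norm
    exact (h2.add (h1.const_mul _)).add (integrable_const _)
  refine hg.mono' ?_ (Filter.Eventually.of_forall fun t => ?_)
  · exact (continuous_id.sub continuous_const).norm.pow 2 |>.aestronglyMeasurable
  · have h := norm_sub_le t a
    have : ‖t - a‖^2 ≤ (‖t‖ + ‖a‖)^2 := by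
      have := norm_nonneg (t - a); nlinarith [norm_nonneg t, norm_nonneg a]
    have habs : ‖‖t - a‖ ^ 2‖ = ‖t - a‖ ^ 2 := by
      rw [Real.norm_eq_abs]; exact abs_of_nonneg (sq_nonneg _)
    rw [habs]; nlinarith

lemma expand_int (ν : Measure E) [IsFiniteMeasure ν]
    (h2 : Integrable (fun t => ‖t‖ ^ 2) ν) (a : E) :
    ∫ t, ‖t - a‖ ^ 2 ∂ν
      = ∫ t, ‖t‖ ^ 2 ∂ν - 2 * inner ℝ (∫ t, t ∂ν) a + (ν Set.univ).toReal * ‖a‖ ^ 2 := by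
  have hid := int_id ν h2
  have hinner : Integrable (fun t : E => inner ℝ a t : E → ℝ) ν := by
    have := (innerSL ℝ a).integrable_comp hid
    simpa using this
  have h1 : ∀ t : E, ‖t - a‖ ^ 2 = ‖t‖ ^ 2 - 2 * inner ℝ t a + ‖a‖ ^ 2 :=
    fun t => norm_sub_sq_real t a
  calc ∫ t, ‖t - a‖ ^ 2 ∂ν = ∫ t, (‖t‖ ^ 2 - 2 * inner ℝ t a + ‖a‖ ^ 2) ∂ν := by
        simp_rw [h1]
    _ = ∫ t, (‖t‖ ^ 2 - 2 * inner ℝ t a) ∂ν + ∫ t, (‖a‖^2 : ℝ) ∂ν := by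
        refine integral_add ?_ (integrable_const _)
        refine h2.sub ?_
        have : (fun t : E => 2 * inner ℝ t a : E → ℝ) = fun t => 2 * (inner ℝ a t : ℝ) := by
          funext t; rw [real_inner_comm]
        rw [this]; exact hinner.const_mul 2
    _ = (∫ t, ‖t‖ ^ 2 ∂ν - ∫ t, (2 * inner ℝ t a : ℝ) ∂ν) + (ν Set.univ).toReal * ‖a‖^2 := by
        have h2' : Integrable (fun t : E => 2 * inner ℝ t a : E → ℝ) ν := by
          have : (fun t : E => 2 * inner ℝ t a : E → ℝ) = fun t => 2 * (inner ℝ a t : ℝ) := by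
            funext t; rw [real_inner_comm]
          rw [this]; exact hinner.const_mul 2
        rw [integral_sub h2 h2', integral_const, smul_eq_mul, Measure.real]
    _ = ∫ t, ‖t‖ ^ 2 ∂ν - 2 * inner ℝ (∫ t, t ∂ν) a + (ν Set.univ).toReal * ‖a‖ ^ 2 := by
        have : ∫ t, (2 * inner ℝ t a : ℝ) ∂ν = 2 * inner ℝ (∫ t, t ∂ν) a := by
          have h := integral_inner (𝕜 := ℝ) hid a
          rw [integral_const_mul]
          rw [show (∫ t, (inner ℝ t a : ℝ) ∂ν) = ∫ t, (inner ℝ a t : ℝ) ∂ν by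
            congr 1; funext t; rw [real_inner_comm]]
          rw [h, real_inner_comm]
        rw [this]

lemma key_diff (ν : Measure E) [IsFiniteMeasure ν]
    (h2 : Integrable (fun t => ‖t‖ ^ 2) ν) (a v b : E)
    (hb : ∫ t, t ∂ν = (ν Set.univ).toReal • b) :
    ∫ t, ‖t - a‖ ^ 2 ∂ν - ∫ t, ‖t - v‖ ^ 2 ∂ν
      = (ν Set.univ).toReal * (‖a - b‖ ^ 2 - ‖v - b‖ ^ 2) := by
  rw [expand_int ν h2 a, expand_int ν h2 v, hb]
  have ha : ‖a - b‖^2 = ‖a‖^2 - 2*inner ℝ a b + ‖b‖^2 := norm_sub_sq_real a b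
  have hv : ‖v - b‖^2 = ‖v‖^2 - 2*inner ℝ v b + ‖b‖^2 := norm_sub_sq_real v b
  rw [ha, hv]
  simp only [inner_smul_left, RCLike.conj_to_real, real_inner_comm b a, real_inner_comm b v]
  ring

/-- Any global minimizer of the ex-ante worst-case functional replies to
each positive-mass word with an action on the line segment between the pooling action
and the conditional mean of the word's cell. -/
theorem ex_ante_optimizer_on_segment
    {L : ℕ} (μ₀ : Measure (EuclideanSpace ℝ (Fin L)))
    [IsProbabilityMeasure μ₀]
    (hL2 : Integrable (fun t => ‖t‖ ^ 2) μ₀)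
    {W : Type} [Fintype W] [Nonempty W]
    (C : W → Set (EuclideanSpace ℝ (Fin L)))
    (hCmeas : ∀ w, MeasurableSet (C w))
    (hCdisj : Pairwise (Function.onFun Disjoint C))
    (hCcover : μ₀ (⋃ w, C w) = 1)
    (p : ℝ) (hp : p ∈ Set.Ioo (0 : ℝ) 1)
    (𝒢 : Set (W → ℝ)) (h𝒢ne : 𝒢.Nonempty) (h𝒢cpt : IsCompact 𝒢)
    (h𝒢simplex : ∀ G ∈ 𝒢, (∀ w, 0 ≤ G w) ∧ (∑ w, G w) = 1)
    (αpool : EuclideanSpace ℝ (Fin L)) (hαpool : αpool = ∫ t, t ∂μ₀)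
    (αcell : W → EuclideanSpace ℝ (Fin L))
    (hαcell : ∀ w, 0 < μ₀ (C w) →
      αcell w = ((μ₀ (C w)).toReal)⁻¹ • ∫ t in C w, t ∂μ₀)
    (F : (W → EuclideanSpace ℝ (Fin L)) → ℝ)
    (hF : ∀ α, F α = sSup ((fun G => ∑ w,
      ((1 - p) * ∫ t in C w, ‖t - α w‖ ^ 2 ∂μ₀
        + p * G w * ∫ t, ‖t - α w‖ ^ 2 ∂μ₀)) '' 𝒢))
    (αex : W → EuclideanSpace ℝ (Fin L))
    (hmin : ∀ α, F αex ≤ F α) :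
    ∀ w, 0 < μ₀ (C w) → αex w ∈ segment ℝ αpool (αcell w) := by
  classical
  intro w hw
  by_contra hnot
  set K := segment ℝ αpool (αcell w) with hK
  set a := αex w with ha
  -- projection onto K
  obtain ⟨v, hvK, hv⟩ := exists_norm_eq_iInf_of_complete_convex
    ⟨αpool, left_mem_segment ℝ _ _⟩ (seg_complete αpool (αcell w))
    (convex_segment _ _) a
  have hinner := (norm_eq_iInf_iff_real_inner_le_zero
    (convex_segment _ _) hvK).1 hv
  have hav : a ≠ v := fun h => hnot (h ▸ hvK)
  have havpos : 0 < ‖a - v‖ ^ 2 := pow_pos (norm_sub_pos_iff.mpr hav) 2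
  have hkey : ∀ b ∈ K, ‖a - v‖ ^ 2 + ‖v - b‖ ^ 2 ≤ ‖a - b‖ ^ 2 := by
    intro b hb
    have h1 : a - b = (a - v) - (b - v) := by abel
    have h2 : ‖a - b‖ ^ 2 = ‖a - v‖ ^ 2 - 2 * inner ℝ (a - v) (b - v) + ‖b - v‖ ^ 2 := by
      rw [h1]; exact norm_sub_sq_real _ _
    have h3 := hinner b hb
    have h4 : ‖v - b‖ = ‖b - v‖ := norm_sub_rev _ _
    rw [h4]; linarith
  -- masses
  set m := (μ₀ (C w)).toReal with hm
  have hmpos : 0 < m := ENNReal.toReal_pos hw.ne' (measure_ne_top μ₀ _)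
  -- mean identities
  have hb_cell : ∫ t, t ∂(μ₀.restrict (C w))
      = ((μ₀.restrict (C w)) Set.univ).toReal • αcell w := by
    rw [Measure.restrict_apply_univ, hαcell w hw, smul_smul, ← hm,
      mul_inv_cancel₀ hmpos.ne', one_smul]
  have hb_pool : ∫ t, t ∂μ₀ = (μ₀ Set.univ).toReal • αpool := by
    rw [measure_univ, hαpool]; simp
  -- integral differences
  have hdC : ∫ t in C w, ‖t - a‖ ^ 2 ∂μ₀ - ∫ t in C w, ‖t - v‖ ^ 2 ∂μ₀
      = m * (‖a - αcell w‖ ^ 2 - ‖v - αcell w‖ ^ 2) := by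
    have := key_diff (μ₀.restrict (C w)) hL2.restrict a v (αcell w) hb_cell
    rwa [Measure.restrict_apply_univ, ← hm] at this
  have hdE : ∫ t, ‖t - a‖ ^ 2 ∂μ₀ - ∫ t, ‖t - v‖ ^ 2 ∂μ₀
      = ‖a - αpool‖ ^ 2 - ‖v - αpool‖ ^ 2 := by
    have := key_diff μ₀ hL2 a v αpool hb_pool
    rwa [measure_univ, ENNReal.toReal_one, one_mul] at this
  set α' := Function.update αex w v with hα'
  set f : (W → EuclideanSpace ℝ (Fin L)) → (W → ℝ) → ℝ := fun α G => ∑ w',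
      ((1 - p) * ∫ t in C w', ‖t - α w'‖ ^ 2 ∂μ₀
        + p * G w' * ∫ t, ‖t - α w'‖ ^ 2 ∂μ₀) with hf
  have hFf : ∀ α, F α = sSup (f α '' 𝒢) := hF
  set δ := (1 - p) * m * ‖a - v‖ ^ 2 with hδ
  have hδpos : 0 < δ := by
    have h1p : 0 < 1 - p := by linarith [hp.2]
    exact mul_pos (mul_pos h1p hmpos) havpos
  have hGle : ∀ G ∈ 𝒢, f α' G + δ ≤ f αex G := by
    intro G hG
    have hGnn : 0 ≤ G w := (h𝒢simplex G hG).1 w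
    have hsum : f αex G - f α' G
        = ((1 - p) * ∫ t in C w, ‖t - a‖ ^ 2 ∂μ₀ + p * G w * ∫ t, ‖t - a‖ ^ 2 ∂μ₀)
          - ((1 - p) * ∫ t in C w, ‖t - v‖ ^ 2 ∂μ₀ + p * G w * ∫ t, ‖t - v‖ ^ 2 ∂μ₀) := by
      rw [hf]
      simp only
      rw [← Finset.sum_sub_distrib]
      rw [Finset.sum_eq_single w]
      · rw [hα', Function.update_self, ← ha]
      · intro b _ hbw
        rw [hα', Function.update_of_ne hbw, sub_self]
      · intro h; exact absurd (Finset.mem_univ w) h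
    have hcell := hkey (αcell w) (right_mem_segment ℝ _ _)
    have hpool := hkey αpool (left_mem_segment ℝ _ _)
    have hexp : f αex G - f α' G
        = (1 - p) * (m * (‖a - αcell w‖ ^ 2 - ‖v - αcell w‖ ^ 2))
          + p * G w * (‖a - αpool‖ ^ 2 - ‖v - αpool‖ ^ 2) := by
      rw [hsum, ← hdC, ← hdE]; ring
    have h1p : 0 < 1 - p := by linarith [hp.2]
    have e1 : ‖a - v‖ ^ 2 ≤ ‖a - αcell w‖ ^ 2 - ‖v - αcell w‖ ^ 2 := by
      have := sq_nonneg ‖v - αcell w‖; linarith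
    have e2 : ‖a - v‖ ^ 2 ≤ ‖a - αpool‖ ^ 2 - ‖v - αpool‖ ^ 2 := by
      have := sq_nonneg ‖v - αpool‖; linarith
    have t1 : δ ≤ (1 - p) * (m * (‖a - αcell w‖ ^ 2 - ‖v - αcell w‖ ^ 2)) := by
      rw [hδ, mul_assoc]
      exact mul_le_mul_of_nonneg_left
        (mul_le_mul_of_nonneg_left e1 hmpos.le) h1p.le
    have t2 : 0 ≤ p * G w * (‖a - αpool‖ ^ 2 - ‖v - αpool‖ ^ 2) :=
      mul_nonneg (mul_nonneg hp.1.le hGnn) ((sq_nonneg _).trans e2)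
    linarith [hexp, t1, t2]
  have hcont : Continuous (f αex) := by
    apply continuous_finset_sum
    intro w' _
    exact continuous_const.add ((continuous_const.mul (continuous_apply w')).mul
      continuous_const)
  have hbdd : BddAbove (f αex '' 𝒢) := (h𝒢cpt.image hcont).bddAbove
  have hlt : F α' ≤ F αex - δ := by
    rw [hFf, hFf]
    apply csSup_le (h𝒢ne.image _)
    rintro y ⟨G, hG, rfl⟩
    have h1 := hGle G hG
    have h2 : f αex G ≤ sSup (f αex '' 𝒢) := le_csSup hbdd ⟨G, hG, rfl⟩
    linarith
  have := hmin α'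
  linarith
end

section
/- Let C ⊆ E be measurable with μ₀(C) > 0 and let K ⊆ [0,1] be a nonempty compact set. If s* ∈ E minimizes the interim worst-case functional U(s) = max_{κ ∈ K} [(1−κ)·E_{μ₀,C}[‖t−s‖²] + κ·∫_E ‖t−s‖² dμ₀] over E, then s* lies on the line segment joining α_C and α_pool, i.e. s* ∈ segment(α_C, α_pool). -/
open MeasureTheory RealInnerProductSpace

lemma expand_sq' {L : ℕ} (ν : Measure (EuclideanSpace ℝ (Fin L))) [IsFiniteMeasure ν]
    (h2 : Integrable (fun t => ‖t‖ ^ 2) ν)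
    (h1 : Integrable (fun t : EuclideanSpace ℝ (Fin L) => t) ν)
    (s : EuclideanSpace ℝ (Fin L)) :
    ∫ t, ‖t - s‖ ^ 2 ∂ν
      = ∫ t, ‖t‖ ^ 2 ∂ν - 2 * ⟪s, (∫ t, t ∂ν)⟫ + (ν Set.univ).toReal * ‖s‖ ^ 2 := by
  have hpt : ∀ t : EuclideanSpace ℝ (Fin L),
      ‖t - s‖ ^ 2 = ‖t‖ ^ 2 - 2 * ⟪s, t⟫ + ‖s‖ ^ 2 := by
    intro t
    rw [norm_sub_sq_real, real_inner_comm]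
  simp_rw [hpt]
  have hi : Integrable (fun t : EuclideanSpace ℝ (Fin L) => 2 * ⟪s, t⟫) ν :=
    (h1.const_inner s).const_mul 2
  have hA : Integrable (fun t : EuclideanSpace ℝ (Fin L) => ‖t‖ ^ 2 - 2 * ⟪s, t⟫) ν :=
    h2.sub hi
  rw [integral_add hA (integrable_const _), integral_sub h2 hi,
    MeasureTheory.integral_const_mul, integral_inner h1, integral_const, smul_eq_mul, measureReal_def]

/-- Any minimizer of the interim worst-case functional lies on the line
segment between the conditional mean `αC` of the cell and the pooling action `αpool`. -/
theorem interim_optimizer_on_segment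
    {L : ℕ} (μ₀ : Measure (EuclideanSpace ℝ (Fin L)))
    [IsProbabilityMeasure μ₀]
    (hL2 : Integrable (fun t => ‖t‖ ^ 2) μ₀)
    (C : Set (EuclideanSpace ℝ (Fin L))) (hCmeas : MeasurableSet C)
    (hC : 0 < μ₀ C)
    (K : Set ℝ) (hKne : K.Nonempty) (hKcpt : IsCompact K)
    (hK : K ⊆ Set.Icc (0 : ℝ) 1)
    (αC αpool : EuclideanSpace ℝ (Fin L))
    (hαC : αC = ((μ₀ C).toReal)⁻¹ • ∫ t in C, t ∂μ₀)
    (hαpool : αpool = ∫ t, t ∂μ₀)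
    (U : EuclideanSpace ℝ (Fin L) → ℝ)
    (hU : ∀ s, U s = sSup ((fun κ =>
      (1 - κ) * (((μ₀ C).toReal)⁻¹ * ∫ t in C, ‖t - s‖ ^ 2 ∂μ₀)
        + κ * ∫ t, ‖t - s‖ ^ 2 ∂μ₀) '' K))
    (sstar : EuclideanSpace ℝ (Fin L))
    (hmin : ∀ s, U sstar ≤ U s) :
    sstar ∈ segment ℝ αC αpool := by
  classical
  have hCfin : μ₀ C ≠ ⊤ := measure_ne_top _ _
  set c : ℝ := (μ₀ C).toReal with hc_def
  have hc : 0 < c := ENNReal.toReal_pos hC.ne' hCfin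
  have h1 : Integrable (fun t : EuclideanSpace ℝ (Fin L) => t) μ₀ := by
    refine Integrable.mono' ((integrable_const (1:ℝ)).add hL2) aestronglyMeasurable_id ?_
    filter_upwards with t
    show ‖t‖ ≤ 1 + ‖t‖ ^ 2
    nlinarith [norm_nonneg t, sq_nonneg (‖t‖ - 1)]
  have h1C : Integrable (fun t : EuclideanSpace ℝ (Fin L) => t) (μ₀.restrict C) := h1.restrict
  have h2C : Integrable (fun t : EuclideanSpace ℝ (Fin L) => ‖t‖ ^ 2) (μ₀.restrict C) :=
    hL2.restrict
  have hresR : ((μ₀.restrict C) Set.univ).toReal = c := by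
    rw [Measure.restrict_apply_univ]
  set G : ℝ → EuclideanSpace ℝ (Fin L) → ℝ := fun κ s =>
      (1 - κ) * (c⁻¹ * ∫ t in C, ‖t - s‖ ^ 2 ∂μ₀) + κ * ∫ t, ‖t - s‖ ^ 2 ∂μ₀ with hG_def
  have hUG : ∀ s, U s = sSup ((fun κ => G κ s) '' K) := hU
  set m : ℝ → EuclideanSpace ℝ (Fin L) := fun κ => (1 - κ) • αC + κ • αpool with hm_def
  have hBC : ∀ s : EuclideanSpace ℝ (Fin L), c⁻¹ * ∫ t in C, ‖t - s‖ ^ 2 ∂μ₀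
      = c⁻¹ * ∫ t in C, ‖t‖ ^ 2 ∂μ₀ - 2 * ⟪s, αC⟫ + ‖s‖ ^ 2 := by
    intro s
    rw [expand_sq' (μ₀.restrict C) h2C h1C s, hresR, hαC, real_inner_smul_right]
    field_simp
  have hBp : ∀ s : EuclideanSpace ℝ (Fin L), (∫ t, ‖t - s‖ ^ 2 ∂μ₀)
      = ∫ t, ‖t‖ ^ 2 ∂μ₀ - 2 * ⟪s, αpool⟫ + ‖s‖ ^ 2 := by
    intro s
    rw [expand_sq' μ₀ hL2 h1 s, hαpool]
    simp
  have key : ∀ (κ : ℝ) (s s' : EuclideanSpace ℝ (Fin L)),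
      G κ s - G κ s' = ‖s - m κ‖ ^ 2 - ‖s' - m κ‖ ^ 2 := by
    intro κ s s'
    have n1 : ‖s - m κ‖ ^ 2 = ‖s‖ ^ 2 - 2 * ⟪s, m κ⟫ + ‖m κ‖ ^ 2 := by
      rw [norm_sub_sq_real]
    have n2 : ‖s' - m κ‖ ^ 2 = ‖s'‖ ^ 2 - 2 * ⟪s', m κ⟫ + ‖m κ‖ ^ 2 := by
      rw [norm_sub_sq_real]
    have i1 : ⟪s, m κ⟫ = (1 - κ) * ⟪s, αC⟫ + κ * ⟪s, αpool⟫ := by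
      simp only [hm_def]
      rw [inner_add_right, real_inner_smul_right, real_inner_smul_right]
    have i2 : ⟪s', m κ⟫ = (1 - κ) * ⟪s', αC⟫ + κ * ⟪s', αpool⟫ := by
      simp only [hm_def]
      rw [inner_add_right, real_inner_smul_right, real_inner_smul_right]
    rw [hG_def]
    simp only
    rw [hBC s, hBp s, hBC s', hBp s', n1, n2, i1, i2]
    ring
  set S : Set (EuclideanSpace ℝ (Fin L)) := segment ℝ αC αpool with hS_def
  have hSconv : Convex ℝ S := convex_segment _ _
  have hSne : S.Nonempty := ⟨αC, left_mem_segment ℝ _ _⟩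
  have hScpt : IsCompact S := by
    rw [hS_def, segment_eq_image]
    exact isCompact_Icc.image
      (((continuous_const.sub continuous_id).smul continuous_const).add
        (continuous_id.smul continuous_const))
  obtain ⟨p, hpS, hp⟩ :=
    exists_norm_eq_iInf_of_complete_convex hSne hScpt.isClosed.isComplete hSconv sstar
  have hproj : ∀ w ∈ S, ⟪sstar - p, w - p⟫ ≤ 0 :=
    (norm_eq_iInf_iff_real_inner_le_zero hSconv hpS).mp hp
  have hmS : ∀ κ ∈ K, m κ ∈ S := by
    intro κ hκ
    obtain ⟨h0, h1'⟩ := hK hκ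
    exact ⟨1 - κ, κ, by linarith, h0, by ring, rfl⟩
  set δ : ℝ := ‖sstar - p‖ ^ 2 with hδ_def
  have hstep : ∀ κ ∈ K, G κ p + δ ≤ G κ sstar := by
    intro κ hκ
    have h := key κ sstar p
    have hexp : ‖sstar - m κ‖ ^ 2
        = δ + 2 * ⟪sstar - p, p - m κ⟫ + ‖p - m κ‖ ^ 2 := by
      have hd : sstar - m κ = (sstar - p) + (p - m κ) := by abel
      rw [hd, norm_add_sq_real]
    have hip : 0 ≤ ⟪sstar - p, p - m κ⟫ := by
      have h0 := hproj (m κ) (hmS κ hκ)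
      have hrw : ⟪sstar - p, p - m κ⟫ = - ⟪sstar - p, m κ - p⟫ := by
        rw [← inner_neg_right]; congr 1; abel
      rw [hrw]; linarith
    nlinarith [sq_nonneg (‖p - m κ‖ : ℝ)]
  have hbdd : BddAbove ((fun κ => G κ sstar) '' K) := by
    refine (hKcpt.image ?_).bddAbove
    exact ((continuous_const.sub continuous_id).mul continuous_const).add
      (continuous_id.mul continuous_const)
  have hUp : U p ≤ U sstar - δ := by
    rw [hUG p]
    refine csSup_le (hKne.image _) ?_
    rintro x ⟨κ, hκ, rfl⟩
    have h2 : G κ sstar ≤ U sstar := by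
      rw [hUG sstar]; exact le_csSup hbdd ⟨κ, hκ, rfl⟩
    have := hstep κ hκ
    simp only at this ⊢
    linarith
  have hδ0 : δ ≤ 0 := by linarith [hmin p]
  have hsp : sstar = p := by
    have hn : ‖sstar - p‖ = 0 := by nlinarith [norm_nonneg (sstar - p)]
    have := norm_eq_zero.mp hn
    rwa [sub_eq_zero] at this
  rw [hsp]
  exact hpS
end

section
/- Let C ⊆ E be measurable with μ₀(C) > 0 and let 0 ≤ κ̲ ≤ κ̄ ≤ 1. If (2κ̄ − 1)·‖α_C − α_pool‖² ≤ Tr_{μ₀} − Tr_{μ₀,C}, then the point β = (1−κ̄)·α_C + κ̄·α_pool is a global minimizer over s ∈ E of the interim worst-case functional U(s) = max_{κ ∈ [κ̲,κ̄]} [(1−κ)·E_{μ₀,C}[‖t−s‖²] + κ·∫_E ‖t−s‖² dμ₀]. -/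
open MeasureTheory

section helpers

variable {L : ℕ}

lemma my_integrable_id_of_sq {ν : Measure (EuclideanSpace ℝ (Fin L))} [IsFiniteMeasure ν]
    (h2 : Integrable (fun t => ‖t‖ ^ 2) ν) :
    Integrable (fun t : EuclideanSpace ℝ (Fin L) => t) ν := by
  refine Integrable.mono' (g := fun t => 1 + ‖t‖ ^ 2) ((integrable_const 1).add h2)
    measurable_id.aestronglyMeasurable ?_
  filter_upwards with t
  have : ‖t‖ ≤ 1 + ‖t‖ ^ 2 := by nlinarith [norm_nonneg t, sq_nonneg (‖t‖ - 1)]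
  simpa using this

lemma my_integrable_sq_sub {ν : Measure (EuclideanSpace ℝ (Fin L))} [IsFiniteMeasure ν]
    (h2 : Integrable (fun t => ‖t‖ ^ 2) ν) (s : EuclideanSpace ℝ (Fin L)) :
    Integrable (fun t => ‖t - s‖ ^ 2) ν := by
  refine Integrable.mono' (g := fun t => 2 * ‖t‖ ^ 2 + 2 * ‖s‖ ^ 2)
    ((h2.const_mul 2).add (integrable_const _))
    (((continuous_id.sub continuous_const).norm.pow 2).aestronglyMeasurable) ?_
  filter_upwards with t
  have h1 : ‖t - s‖ ≤ ‖t‖ + ‖s‖ := norm_sub_le t s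
  have h0 : (0:ℝ) ≤ ‖t - s‖ := norm_nonneg _
  have : ‖t - s‖ ^ 2 ≤ 2 * ‖t‖ ^ 2 + 2 * ‖s‖ ^ 2 := by
    nlinarith [sq_nonneg (‖t‖ - ‖s‖), norm_nonneg t, norm_nonneg s]
  simpa [abs_of_nonneg (sq_nonneg ‖t - s‖)] using this

lemma my_variance_decomp (ν : Measure (EuclideanSpace ℝ (Fin L))) [IsProbabilityMeasure ν]
    (h2 : Integrable (fun t => ‖t‖ ^ 2) ν) (s : EuclideanSpace ℝ (Fin L)) :
    ∫ t, ‖t - s‖ ^ 2 ∂ν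
      = (∫ t, ‖t - (∫ u, u ∂ν)‖ ^ 2 ∂ν) + ‖s - ∫ u, u ∂ν‖ ^ 2 := by
  set α := ∫ u, u ∂ν with hα
  have hid := my_integrable_id_of_sq h2
  have hsub : Integrable (fun t : EuclideanSpace ℝ (Fin L) => t - α) ν :=
    hid.sub (integrable_const α)
  have hmean : ∫ t, (t - α) ∂ν = 0 := by
    rw [integral_sub hid (integrable_const α), integral_const]
    rw [probReal_univ, one_smul, hα, sub_self]
  have hexp : ∀ t : EuclideanSpace ℝ (Fin L), ‖t - s‖ ^ 2
      = ‖t - α‖ ^ 2 + 2 * (inner ℝ (α - s) (t - α) : ℝ) + ‖α - s‖ ^ 2 := by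
    intro t
    have h : t - s = (t - α) + (α - s) := by abel
    rw [h, norm_add_sq_real, real_inner_comm]
  have hA : Integrable (fun t => ‖t - α‖ ^ 2) ν := my_integrable_sq_sub h2 α
  have hB : Integrable (fun t : EuclideanSpace ℝ (Fin L)
      => 2 * (inner ℝ (α - s) (t - α) : ℝ)) ν :=
    (hsub.const_inner (α - s)).const_mul 2
  have hAB : Integrable (fun t : EuclideanSpace ℝ (Fin L) =>
      ‖t - α‖ ^ 2 + 2 * (inner ℝ (α - s) (t - α) : ℝ)) ν := hA.add hB
  calc ∫ t, ‖t - s‖ ^ 2 ∂ν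
      = ∫ t, (‖t - α‖ ^ 2 + 2 * (inner ℝ (α - s) (t - α) : ℝ) + ‖α - s‖ ^ 2) ∂ν := by
        exact integral_congr_ae (Filter.Eventually.of_forall fun t => hexp t)
    _ = (∫ t, ‖t - α‖ ^ 2 ∂ν) + (∫ t, 2 * (inner ℝ (α - s) (t - α) : ℝ) ∂ν)
          + ‖α - s‖ ^ 2 := by
        rw [integral_add hAB (integrable_const _), integral_add hA hB,
          integral_const]
        simp
    _ = (∫ t, ‖t - α‖ ^ 2 ∂ν) + ‖s - α‖ ^ 2 := by
        rw [integral_const_mul, integral_inner hsub, hmean]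
        simp [norm_sub_rev α s]

lemma my_weighted_identity (κ : ℝ) (a b s : EuclideanSpace ℝ (Fin L)) :
    (1 - κ) * ‖s - a‖ ^ 2 + κ * ‖s - b‖ ^ 2
      = ‖s - ((1 - κ) • a + κ • b)‖ ^ 2 + (1 - κ) * κ * ‖a - b‖ ^ 2 := by
  have h1 : s - ((1 - κ) • a + κ • b) = (1 - κ) • (s - a) + κ • (s - b) := by
    module
  have h2 : ‖a - b‖ = ‖(s - b) - (s - a)‖ := by
    congr 1; abel
  have key : ∀ u v : EuclideanSpace ℝ (Fin L),
      (1 - κ) * ‖u‖ ^ 2 + κ * ‖v‖ ^ 2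
        = ‖(1 - κ) • u + κ • v‖ ^ 2 + (1 - κ) * κ * ‖v - u‖ ^ 2 := by
    intro u v
    rw [norm_add_sq_real, norm_sub_sq_real, real_inner_smul_left,
      real_inner_smul_right, norm_smul, norm_smul, real_inner_comm v u]
    simp only [Real.norm_eq_abs, mul_pow, sq_abs]
    ring
  rw [h1, h2]
  exact key (s - a) (s - b)

end helpers

/-- If the regularity condition
`(2κ̄ − 1)·‖αC − αpool‖² ≤ Tr_{μ₀} − Tr_{μ₀,C}` holds, then the point
`β = (1−κ̄)·αC + κ̄·αpool` globally minimizes the interim worst-case functional. -/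
theorem regular_word_interim_minimizer
    {L : ℕ} (μ₀ : Measure (EuclideanSpace ℝ (Fin L)))
    [IsProbabilityMeasure μ₀]
    (hL2 : Integrable (fun t => ‖t‖ ^ 2) μ₀)
    (C : Set (EuclideanSpace ℝ (Fin L))) (hCmeas : MeasurableSet C)
    (hC : 0 < μ₀ C)
    (κlo κhi : ℝ) (h0 : 0 ≤ κlo) (hlo : κlo ≤ κhi) (hhi : κhi ≤ 1)
    (αC αpool : EuclideanSpace ℝ (Fin L))
    (hαC : αC = ((μ₀ C).toReal)⁻¹ • ∫ t in C, t ∂μ₀)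
    (hαpool : αpool = ∫ t, t ∂μ₀)
    (Trμ TrC : ℝ)
    (hTrμ : Trμ = ∫ t, ‖t - αpool‖ ^ 2 ∂μ₀)
    (hTrC : TrC = ((μ₀ C).toReal)⁻¹ * ∫ t in C, ‖t - αC‖ ^ 2 ∂μ₀)
    (hreg : (2 * κhi - 1) * ‖αC - αpool‖ ^ 2 ≤ Trμ - TrC)
    (U : EuclideanSpace ℝ (Fin L) → ℝ)
    (hU : ∀ s, U s = sSup ((fun κ =>
      (1 - κ) * (((μ₀ C).toReal)⁻¹ * ∫ t in C, ‖t - s‖ ^ 2 ∂μ₀)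
        + κ * ∫ t, ‖t - s‖ ^ 2 ∂μ₀) '' Set.Icc κlo κhi))
    (β : EuclideanSpace ℝ (Fin L))
    (hβ : β = (1 - κhi) • αC + κhi • αpool) :
    ∀ s, U β ≤ U s := by
  -- the conditional measure
  have hCne : μ₀ C ≠ 0 := hC.ne'
  have hCfin : μ₀ C ≠ ⊤ := (measure_ne_top μ₀ C)
  set ν : Measure (EuclideanSpace ℝ (Fin L)) := (μ₀ C)⁻¹ • μ₀.restrict C with hν
  have hνprob : IsProbabilityMeasure ν := by
    constructor
    rw [hν, Measure.smul_apply, Measure.restrict_apply_univ, smul_eq_mul]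
    exact ENNReal.inv_mul_cancel hCne hCfin
  have hνint : ∀ f : EuclideanSpace ℝ (Fin L) → ℝ,
      ∫ t, f t ∂ν = ((μ₀ C).toReal)⁻¹ * ∫ t in C, f t ∂μ₀ := by
    intro f
    rw [hν, integral_smul_measure, ENNReal.toReal_inv, smul_eq_mul]
  have hνintE : ∫ t, t ∂ν = αC := by
    rw [hν, integral_smul_measure, ENNReal.toReal_inv, hαC]
  have h2ν : Integrable (fun t => ‖t‖ ^ 2) ν :=
    (hL2.restrict (s := C)).smul_measure (ENNReal.inv_ne_top.2 hCne)
  -- the two quadratic expansions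
  have hFp : ∀ s, ∫ t, ‖t - s‖ ^ 2 ∂μ₀ = Trμ + ‖s - αpool‖ ^ 2 := by
    intro s
    rw [my_variance_decomp μ₀ hL2 s, ← hαpool, hTrμ]
  have hFC : ∀ s, ((μ₀ C).toReal)⁻¹ * ∫ t in C, ‖t - s‖ ^ 2 ∂μ₀
      = TrC + ‖s - αC‖ ^ 2 := by
    intro s
    rw [← hνint, my_variance_decomp ν h2ν s, hνintE, hTrC, ← hνint]
  -- abbreviations
  set d : ℝ := ‖αC - αpool‖ with hd
  have hκhi0 : 0 ≤ κhi := le_trans h0 hlo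
  -- value function
  have hval : ∀ s κ, (1 - κ) * (((μ₀ C).toReal)⁻¹ * ∫ t in C, ‖t - s‖ ^ 2 ∂μ₀)
        + κ * ∫ t, ‖t - s‖ ^ 2 ∂μ₀
      = (1 - κ) * (TrC + ‖s - αC‖ ^ 2) + κ * (Trμ + ‖s - αpool‖ ^ 2) := by
    intro s κ
    rw [hFC, hFp]
  -- norms at β
  have hβC : ‖β - αC‖ ^ 2 = κhi ^ 2 * d ^ 2 := by
    have : β - αC = κhi • (αpool - αC) := by rw [hβ]; module
    rw [this, norm_smul, norm_sub_rev]
    simp [mul_pow, sq_abs, hd]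
  have hβp : ‖β - αpool‖ ^ 2 = (1 - κhi) ^ 2 * d ^ 2 := by
    have : β - αpool = (1 - κhi) • (αC - αpool) := by rw [hβ]; module
    rw [this, norm_smul]
    simp [mul_pow, sq_abs, hd]
  -- G(β) - F(β) ≥ 0
  have hGF : TrC + ‖β - αC‖ ^ 2 ≤ Trμ + ‖β - αpool‖ ^ 2 := by
    rw [hβC, hβp]; nlinarith [hreg]
  intro s
  have hne : (Set.Icc κlo κhi).Nonempty := Set.nonempty_Icc.2 hlo
  have hκhimem : κhi ∈ Set.Icc κlo κhi := ⟨hlo, le_refl _⟩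
  have hmaxβ : U β ≤ (1 - κhi) * (TrC + ‖β - αC‖ ^ 2) + κhi * (Trμ + ‖β - αpool‖ ^ 2) := by
    rw [hU]
    refine csSup_le (hne.image _) ?_
    rintro x ⟨κ, hκ, rfl⟩
    simp only [hval]
    nlinarith [hκ.2, hGF]
  have hmaxs : (1 - κhi) * (TrC + ‖s - αC‖ ^ 2) + κhi * (Trμ + ‖s - αpool‖ ^ 2) ≤ U s := by
    rw [hU]
    have hbdd : BddAbove ((fun κ =>
        (1 - κ) * (((μ₀ C).toReal)⁻¹ * ∫ t in C, ‖t - s‖ ^ 2 ∂μ₀)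
          + κ * ∫ t, ‖t - s‖ ^ 2 ∂μ₀) '' Set.Icc κlo κhi) := by
      refine (isCompact_Icc.image ?_).bddAbove
      fun_prop
    have hmem := Set.mem_image_of_mem (fun κ =>
        (1 - κ) * (((μ₀ C).toReal)⁻¹ * ∫ t in C, ‖t - s‖ ^ 2 ∂μ₀)
          + κ * ∫ t, ‖t - s‖ ^ 2 ∂μ₀) hκhimem
    have := le_csSup hbdd hmem
    simpa only [hval] using this
  refine le_trans hmaxβ (le_trans ?_ hmaxs)
  -- β minimizes the κhi-weighted objective
  have hids := my_weighted_identity κhi αC αpool s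
  have hidβ := my_weighted_identity κhi αC αpool β
  rw [← hβ] at hids hidβ
  nlinarith [sq_nonneg ‖s - β‖, norm_nonneg (β - β), sq_nonneg d]
end

section
/- There exists a message w ∈ W with μ₀(C(w)) > 0 such that ‖α_{C(w)} − α_pool‖² ≤ Tr_{μ₀} − Tr_{μ₀,C(w)}. (In particular, a regular word always exists, since (2κ − 1) ≤ 1 for every κ ∈ [0,1].) -/
open MeasureTheory

private lemma sq_norm_sub_integrable {L : ℕ} {μ : Measure (EuclideanSpace ℝ (Fin L))}
    [IsProbabilityMeasure μ] (hL2 : Integrable (fun t => ‖t‖ ^ 2) μ)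
    (c : EuclideanSpace ℝ (Fin L)) : Integrable (fun t => ‖t - c‖ ^ 2) μ := by
  refine Integrable.mono' ((hL2.const_mul 2).add (integrable_const (2 * ‖c‖ ^ 2))) ?_ ?_
  · exact (Continuous.pow (continuous_norm.comp (continuous_id.sub continuous_const)) 2).aestronglyMeasurable
  · filter_upwards with t
    have h1 : ‖t - c‖ ≤ ‖t‖ + ‖c‖ := norm_sub_le t c
    have h2 : ‖t - c‖ ^ 2 ≤ (‖t‖ + ‖c‖) ^ 2 := pow_le_pow_left₀ (norm_nonneg _) h1 2
    have h3 : (‖t‖ + ‖c‖) ^ 2 ≤ 2 * ‖t‖ ^ 2 + 2 * ‖c‖ ^ 2 := by nlinarith [sq_nonneg (‖t‖ - ‖c‖)]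
    simp only [Pi.add_apply]
    rw [Real.norm_eq_abs, abs_of_nonneg (by positivity)]
    linarith

private lemma id_integrable {L : ℕ} {μ : Measure (EuclideanSpace ℝ (Fin L))}
    [IsProbabilityMeasure μ] (hL2 : Integrable (fun t => ‖t‖ ^ 2) μ) :
    Integrable (fun t : EuclideanSpace ℝ (Fin L) => t) μ := by
  refine Integrable.mono' (hL2.add (integrable_const 1)) aestronglyMeasurable_id ?_
  filter_upwards with t
  simp only [Pi.add_apply]
  nlinarith [sq_nonneg (‖t‖ - 1), norm_nonneg t]


/-- In any measurable tessellation there exists a positive-mass word `w`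
with `‖α_{C(w)} − α_pool‖² ≤ Tr_{μ₀} − Tr_{μ₀,C(w)}`; in particular a regular word
always exists. -/
theorem regular_word_exists
    {L : ℕ} (μ₀ : Measure (EuclideanSpace ℝ (Fin L)))
    [IsProbabilityMeasure μ₀]
    (hL2 : Integrable (fun t => ‖t‖ ^ 2) μ₀)
    {W : Type} [Fintype W] [Nonempty W]
    (C : W → Set (EuclideanSpace ℝ (Fin L)))
    (hCmeas : ∀ w, MeasurableSet (C w))
    (hCdisj : Pairwise (Function.onFun Disjoint C))
    (hCcover : μ₀ (⋃ w, C w) = 1)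
    (αpool : EuclideanSpace ℝ (Fin L)) (hαpool : αpool = ∫ t, t ∂μ₀)
    (αcell : W → EuclideanSpace ℝ (Fin L))
    (hαcell : ∀ w, 0 < μ₀ (C w) →
      αcell w = ((μ₀ (C w)).toReal)⁻¹ • ∫ t in C w, t ∂μ₀)
    (Trμ : ℝ) (hTrμ : Trμ = ∫ t, ‖t - αpool‖ ^ 2 ∂μ₀)
    (TrC : W → ℝ)
    (hTrC : ∀ w, 0 < μ₀ (C w) →
      TrC w = ((μ₀ (C w)).toReal)⁻¹ * ∫ t in C w, ‖t - αcell w‖ ^ 2 ∂μ₀) :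
    ∃ w, 0 < μ₀ (C w) ∧ ‖αcell w - αpool‖ ^ 2 ≤ Trμ - TrC w := by
  classical
  set p : W → ℝ := fun w => (μ₀ (C w)).toReal with hp
  set g : W → ℝ := fun w => p w * (TrC w + ‖αcell w - αpool‖ ^ 2) with hg
  have hpnn : ∀ w, 0 ≤ p w := fun w => ENNReal.toReal_nonneg
  -- per-cell decomposition
  have key : ∀ w, ∫ t in C w, ‖t - αpool‖ ^ 2 ∂μ₀ = g w := by
    intro w
    by_cases hw : 0 < μ₀ (C w)
    · have hp0 : 0 < p w := ENNReal.toReal_pos hw.ne' (measure_ne_top _ _)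
      have hint_t : IntegrableOn (fun t => t) (C w) μ₀ := (id_integrable hL2).integrableOn
      have hIC : ∫ t in C w, t ∂μ₀ = p w • αcell w := by
        rw [hαcell w hw, smul_smul, mul_inv_cancel₀ hp0.ne', one_smul]
      have hsub_int : IntegrableOn (fun t => t - αcell w) (C w) μ₀ :=
        hint_t.sub (integrable_const (αcell w))
      have hzero : ∫ t in C w, (t - αcell w) ∂μ₀ = 0 := by
        rw [integral_sub hint_t (integrable_const (αcell w)), hIC, setIntegral_const, measureReal_def]
        exact sub_self _
      have hinner : ∫ t in C w, (inner ℝ (αcell w - αpool) (t - αcell w) : ℝ) ∂μ₀ = 0 := by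
        rw [integral_inner hsub_int (αcell w - αpool), hzero, inner_zero_right]
      have hptw : ∀ t : EuclideanSpace ℝ (Fin L),
          ‖t - αpool‖ ^ 2 = ‖t - αcell w‖ ^ 2
            + 2 * (inner ℝ (αcell w - αpool) (t - αcell w) : ℝ) + ‖αcell w - αpool‖ ^ 2 := by
        intro t
        have h : t - αpool = (t - αcell w) + (αcell w - αpool) := by abel
        rw [h, norm_add_sq_real, real_inner_comm]
      have hi1 : IntegrableOn (fun t => ‖t - αcell w‖ ^ 2) (C w) μ₀ :=
        (sq_norm_sub_integrable hL2 (αcell w)).integrableOn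
      have hi2 : IntegrableOn
          (fun t => 2 * (inner ℝ (αcell w - αpool) (t - αcell w) : ℝ)) (C w) μ₀ :=
        (((innerSL ℝ (αcell w - αpool)).integrable_comp hsub_int).const_mul 2)
      have hi12 : IntegrableOn (fun t => ‖t - αcell w‖ ^ 2
          + 2 * (inner ℝ (αcell w - αpool) (t - αcell w) : ℝ)) (C w) μ₀ := hi1.add hi2
      have hcell : ∫ t in C w, ‖t - αcell w‖ ^ 2 ∂μ₀ = p w * TrC w := by
        rw [hTrC w hw, ← mul_assoc, mul_inv_cancel₀ hp0.ne', one_mul]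
      calc ∫ t in C w, ‖t - αpool‖ ^ 2 ∂μ₀
          = ∫ t in C w, (‖t - αcell w‖ ^ 2
              + 2 * (inner ℝ (αcell w - αpool) (t - αcell w) : ℝ)
              + ‖αcell w - αpool‖ ^ 2) ∂μ₀ :=
            integral_congr_ae (Filter.Eventually.of_forall fun t => hptw t)
        _ = (∫ t in C w, (‖t - αcell w‖ ^ 2
              + 2 * (inner ℝ (αcell w - αpool) (t - αcell w) : ℝ)) ∂μ₀)
              + ∫ t in C w, ‖αcell w - αpool‖ ^ 2 ∂μ₀ :=
            integral_add hi12 (integrable_const _)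
        _ = (∫ t in C w, ‖t - αcell w‖ ^ 2 ∂μ₀)
              + (∫ t in C w, 2 * (inner ℝ (αcell w - αpool) (t - αcell w) : ℝ) ∂μ₀)
              + ∫ t in C w, ‖αcell w - αpool‖ ^ 2 ∂μ₀ := by
            rw [integral_add hi1 hi2]
        _ = p w * TrC w + 0 + p w * ‖αcell w - αpool‖ ^ 2 := by
            rw [hcell, MeasureTheory.integral_const_mul, hinner, mul_zero,
              setIntegral_const, smul_eq_mul, measureReal_def]
        _ = g w := by rw [hg]; ring
    · have hz : μ₀ (C w) = 0 := by simpa [pos_iff_ne_zero] using hw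
      have hr : μ₀.restrict (C w) = 0 := Measure.restrict_eq_zero.2 hz
      rw [hr]
      simp [hg, hp, hz]
  -- total law
  have hU : MeasurableSet (⋃ w, C w) := MeasurableSet.iUnion hCmeas
  have hcompl : μ₀ (⋃ w, C w)ᶜ = 0 := by
    rw [measure_compl hU (measure_ne_top _ _), hCcover, measure_univ, tsub_self]
  have hres : μ₀.restrict (⋃ w, C w) = μ₀ := by
    refine Measure.restrict_eq_self_of_ae_mem ?_
    rw [ae_iff]
    exact hcompl
  have total : Trμ = ∑ w, g w :=
    calc Trμ = ∫ t, ‖t - αpool‖ ^ 2 ∂μ₀ := hTrμ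
      _ = ∫ t in ⋃ w, C w, ‖t - αpool‖ ^ 2 ∂μ₀ := by conv_lhs => rw [← hres]
      _ = ∑' w, ∫ t in C w, ‖t - αpool‖ ^ 2 ∂μ₀ :=
          integral_iUnion hCmeas hCdisj (sq_norm_sub_integrable hL2 αpool).integrableOn
      _ = ∑ w, ∫ t in C w, ‖t - αpool‖ ^ 2 ∂μ₀ := tsum_fintype _
      _ = ∑ w, g w := Finset.sum_congr rfl fun w _ => key w
  have mass : ∑ w, p w = 1 := by
    have h1 : μ₀ (⋃ w, C w) = ∑' w, μ₀ (C w) := measure_iUnion hCdisj hCmeas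
    have h2 : (∑' w, μ₀ (C w)).toReal = 1 := by rw [← h1, hCcover, ENNReal.toReal_one]
    rwa [ENNReal.tsum_toReal_eq (fun w => measure_ne_top _ _), tsum_fintype] at h2
  -- conclusion by contradiction
  by_contra hcon
  push_neg at hcon
  have hex : ∃ w, 0 < μ₀ (C w) := by
    by_contra hall
    push_neg at hall
    have hz : ∀ w, p w = 0 := fun w => by
      simp [hp, le_zero_iff.1 (hall w)]
    rw [Finset.sum_congr rfl (fun w _ => hz w)] at mass
    simp at mass
  obtain ⟨w0, hw0⟩ := hex
  have hstrict : ∑ w, p w * Trμ < ∑ w, g w := by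
    refine Finset.sum_lt_sum (fun w _ => ?_) ⟨w0, Finset.mem_univ w0, ?_⟩
    · by_cases hw : 0 < μ₀ (C w)
      · have h := hcon w hw
        exact mul_le_mul_of_nonneg_left (by linarith) (hpnn w)
      · have hz : μ₀ (C w) = 0 := by simpa [pos_iff_ne_zero] using hw
        simp [hg, hp, hz]
    · have hp0 : 0 < p w0 := ENNReal.toReal_pos hw0.ne' (measure_ne_top _ _)
      have h := hcon w0 hw0
      exact mul_lt_mul_of_pos_left (by linarith) hp0
  rw [← Finset.sum_mul, mass, one_mul, ← total] at hstrict
  exact lt_irrefl _ hstrict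
end

section
/- Let E be a strictly convex real normed vector space and let ℓ : ℝ → ℝ be strictly convex and strictly increasing on [0,∞). Then for every fixed t ∈ E, the map s ↦ ℓ(‖t − s‖) is strictly convex on E. -/
/-- In a strictly convex real normed vector space, if `ℓ` is strictly
convex and strictly increasing on `[0,∞)`, then for every fixed `t` the map
`s ↦ ℓ(‖t − s‖)` is strictly convex on `E`. -/
theorem strictConvexOn_loss_of_norm
    {E : Type} [NormedAddCommGroup E] [NormedSpace ℝ E] [StrictConvexSpace ℝ E]
    (ℓ : ℝ → ℝ)
    (hconv : StrictConvexOn ℝ (Set.Ici (0 : ℝ)) ℓ)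
    (hmono : StrictMonoOn ℓ (Set.Ici (0 : ℝ)))
    (t : E) :
    StrictConvexOn ℝ (Set.univ : Set E) (fun s => ℓ ‖t - s‖) := by
  refine ⟨convex_univ, fun x _ y _ hxy a b ha hb hab => ?_⟩
  have hx0 : (0:ℝ) ≤ ‖t - x‖ := norm_nonneg _
  have hy0 : (0:ℝ) ≤ ‖t - y‖ := norm_nonneg _
  have hne : t - x ≠ t - y := fun h => hxy (by
    have := sub_right_injective h; exact this)
  have hcombo : t - (a • x + b • y) = a • (t - x) + b • (t - y) := by
    rw [smul_sub, smul_sub, sub_add_sub_comm, ← add_smul, hab, one_smul]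
  by_cases hr : ‖t - x‖ = ‖t - y‖
  · have hlt : ‖t - (a • x + b • y)‖ < ‖t - y‖ := by
      rw [hcombo]
      exact norm_combo_lt_of_ne (le_of_eq hr) le_rfl hne ha hb hab
    calc ℓ ‖t - (a • x + b • y)‖ < ℓ ‖t - y‖ :=
            hmono (norm_nonneg _) hy0 hlt
      _ = a • ℓ ‖t - x‖ + b • ℓ ‖t - y‖ := by
            rw [hr, smul_eq_mul, smul_eq_mul, ← add_mul, hab, one_mul]
  · have h1 : ℓ ‖t - (a • x + b • y)‖ ≤ ℓ (a * ‖t - x‖ + b * ‖t - y‖) := by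
      refine hmono.monotoneOn (norm_nonneg _) ?_ ?_
      · exact add_nonneg (mul_nonneg ha.le hx0) (mul_nonneg hb.le hy0)
      · rw [hcombo]
        calc ‖a • (t - x) + b • (t - y)‖ ≤ ‖a • (t - x)‖ + ‖b • (t - y)‖ :=
              norm_add_le _ _
          _ = a * ‖t - x‖ + b * ‖t - y‖ := by
              rw [norm_smul, norm_smul, Real.norm_of_nonneg ha.le,
                Real.norm_of_nonneg hb.le]
    have h2 : ℓ (a * ‖t - x‖ + b * ‖t - y‖) < a * ℓ ‖t - x‖ + b * ℓ ‖t - y‖ :=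
      hconv.2 hx0 hy0 hr ha hb hab
    calc ℓ ‖t - (a • x + b • y)‖ ≤ ℓ (a * ‖t - x‖ + b * ‖t - y‖) := h1
      _ < a * ℓ ‖t - x‖ + b * ℓ ‖t - y‖ := h2
      _ = a • ℓ ‖t - x‖ + b • ℓ ‖t - y‖ := rfl
end

section
/- Fix integers m ≥ 1 and n ≥ 1 and a real q with 0 < q < m/(m+1). The Shannon-type channel ε_S with error probability q on the message space W = Fin n → Fin (m+1) is of noisy-talk-type if and only if n = 1. -/
/-- A channel `ε` on the message space `W` is of noisy-talk-type if there are
message-wise error probabilities `p : W → [0,1]` and an error distribution `G` with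
`ε(w|v) = (1 − p v)·1_{v}(w) + p v · G w`. -/
def IsNoisyTalkType {W : Type} [Fintype W] [DecidableEq W]
    (ε : W → W → ℝ) : Prop :=
  ∃ p G : W → ℝ,
    (∀ v, p v ∈ Set.Icc (0 : ℝ) 1) ∧ (∀ w, G w ∈ Set.Icc (0 : ℝ) 1) ∧
    (∑ w, G w) = 1 ∧
    ∀ v w, ε v w = (1 - p v) * (if w = v then 1 else 0) + p v * G w

private lemma final_contra (m q : ℝ) (hqm : q * (m + 1) < m) (h9 : (1 - q) * m = q) :
    False := by nlinarith

set_option maxHeartbeats 1600000 in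
/-- For `m ≥ 1`, `n ≥ 1` and `0 < q < m/(m+1)`, the Shannon-type channel
`ε_S(w|v) = (1−q)^{n−d(v,w)}·(q/m)^{d(v,w)}` on `W = Fin n → Fin (m+1)` is of
noisy-talk-type iff `n = 1`. -/
theorem shannon_is_noisy_talk_iff
    (m n : ℕ) (hm : 1 ≤ m) (hn : 1 ≤ n) (q : ℝ)
    (hq : 0 < q) (hq' : q < (m : ℝ) / ((m : ℝ) + 1)) :
    IsNoisyTalkType (fun v w : Fin n → Fin (m + 1) =>
      (1 - q) ^ (n - hammingDist v w) * (q / (m : ℝ)) ^ (hammingDist v w))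
      ↔ n = 1 := by
  have hm1 : (1:ℝ) ≤ (m:ℝ) := by exact_mod_cast hm
  have hmpos : (0:ℝ) < (m:ℝ) := by linarith
  have hqm : q * ((m:ℝ) + 1) < m := by
    rw [lt_div_iff₀ (by linarith)] at hq'; exact hq'
  have hq1 : q < 1 := by nlinarith
  constructor
  · intro h
    by_contra hne
    have hn2 : 2 ≤ n := by omega
    obtain ⟨k, rfl⟩ : ∃ k, n = k + 2 := ⟨n - 2, by omega⟩
    obtain ⟨p, G, hp, hG, hsum, hE⟩ := h
    set z : Fin (m+1) := ⟨0, by omega⟩ with hz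
    set o : Fin (m+1) := ⟨1, by omega⟩ with ho
    have hzo : z ≠ o := by simp [hz, ho, Fin.ext_iff]
    set i0 : Fin (k+2) := ⟨0, by omega⟩ with hi0
    set i1 : Fin (k+2) := ⟨1, by omega⟩ with hi1
    have hi01 : i0 ≠ i1 := by simp [hi0, hi1, Fin.ext_iff]
    set a : Fin (k+2) → Fin (m+1) := fun _ => z with ha
    set b : Fin (k+2) → Fin (m+1) := fun i => if i = i0 then o else z with hb
    set c' : Fin (k+2) → Fin (m+1) := fun i => if i = i1 then o else z with hc'
    set c : Fin (k+2) → Fin (m+1) := fun i => if i = i0 ∨ i = i1 then o else z with hc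
    have hdist : ∀ x y : Fin (k+2) → Fin (m+1),
        hammingDist x y = (Finset.univ.filter fun i => x i ≠ y i).card := fun _ _ => rfl
    have d_ac' : hammingDist a c' = 1 := by
      rw [hdist]
      have : (Finset.univ.filter fun i => a i ≠ c' i) = {i1} := by
        ext i
        simp only [Finset.mem_filter, Finset.mem_univ, true_and, Finset.mem_singleton,
          ha, hc']
        split_ifs with h1
        · simp [h1, hzo]
        · simp [h1]
      rw [this]; simp
    have d_ac : hammingDist a c = 2 := by
      rw [hdist]
      have : (Finset.univ.filter fun i => a i ≠ c i) = {i0, i1} := by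
        ext i
        simp only [Finset.mem_filter, Finset.mem_univ, true_and, Finset.mem_insert,
          Finset.mem_singleton, ha, hc]
        split_ifs with h1
        · simp [h1, hzo]
        · push_neg at h1; simp [h1.1, h1.2]
      rw [this]
      rw [Finset.card_insert_of_notMem (by simp [hi01]), Finset.card_singleton]
    have d_bc' : hammingDist b c' = 2 := by
      rw [hdist]
      have : (Finset.univ.filter fun i => b i ≠ c' i) = {i0, i1} := by
        ext i
        simp only [Finset.mem_filter, Finset.mem_univ, true_and, Finset.mem_insert,
          Finset.mem_singleton, hb, hc']
        rcases eq_or_ne i i0 with rfl | h0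
        · simp [hi01, hzo.symm]
        · rcases eq_or_ne i i1 with rfl | h1
          · simp [h0, hzo]
          · simp [h0, h1]
      rw [this]
      rw [Finset.card_insert_of_notMem (by simp [hi01]), Finset.card_singleton]
    have d_bc : hammingDist b c = 1 := by
      rw [hdist]
      have : (Finset.univ.filter fun i => b i ≠ c i) = {i1} := by
        ext i
        simp only [Finset.mem_filter, Finset.mem_univ, true_and, Finset.mem_singleton,
          hb, hc]
        rcases eq_or_ne i i0 with rfl | h0
        · simp [hi01]
        · rcases eq_or_ne i i1 with rfl | h1
          · simp [h0, hzo]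
          · simp [h0, h1]
      rw [this]; simp
    have ne_of_d : ∀ x y : Fin (k+2) → Fin (m+1), hammingDist x y ≠ 0 → y ≠ x := by
      intro x y hxy he
      exact hxy (by simp [he, hammingDist_self])
    have hc'a : c' ≠ a := ne_of_d a c' (by omega)
    have hca : c ≠ a := ne_of_d a c (by omega)
    have hc'b : c' ≠ b := ne_of_d b c' (by omega)
    have hcb : c ≠ b := ne_of_d b c (by omega)
    have e1 : p a * G c' = (1-q)^(k+1) * (q/m) := by
      have h := hE a c'
      simp only [d_ac', if_neg hc'a] at h
      simpa using h.symm
    have e2 : p a * G c = (1-q)^k * (q/m)^2 := by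
      have h := hE a c
      simp only [d_ac, if_neg hca] at h
      simpa using h.symm
    have e3 : p b * G c' = (1-q)^k * (q/m)^2 := by
      have h := hE b c'
      simp only [d_bc', if_neg hc'b] at h
      simpa using h.symm
    have e4 : p b * G c = (1-q)^(k+1) * (q/m) := by
      have h := hE b c
      simp only [d_bc, if_neg hcb] at h
      simpa using h.symm
    have key : ((1-q)^(k+1) * (q/m)) * ((1-q)^(k+1) * (q/m))
        = ((1-q)^k * (q/m)^2) * ((1-q)^k * (q/m)^2) := by
      calc ((1-q)^(k+1) * (q/m)) * ((1-q)^(k+1) * (q/m))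
          = (p a * G c') * (p b * G c) := by rw [e1, e4]
        _ = (p a * G c) * (p b * G c') := by ring
        _ = ((1-q)^k * (q/m)^2) * ((1-q)^k * (q/m)^2) := by rw [e2, e3]
    have h1q : (0:ℝ) < 1 - q := by linarith
    have hqmpos : (0:ℝ) < q / m := by positivity
    have hA1 : (0:ℝ) < (1-q)^(k+1) * (q/m) := by positivity
    have hA2 : (0:ℝ) < (1-q)^k * (q/m)^2 := by positivity
    have hA : (1-q)^(k+1) * (q/m) = (1-q)^k * (q/m)^2 := by
      rcases mul_self_eq_mul_self_iff.mp key with h | h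
      · exact h
      · exfalso; linarith
    have hpk : (0:ℝ) < (1-q)^k := pow_pos h1q k
    rw [pow_succ] at hA
    have h6 : (1-q) * (q/m) = (q/m) * (q/m) := by
      have h7 : (1-q)^k * ((1-q) * (q/m)) = (1-q)^k * ((q/m) * (q/m)) := by
        rw [← mul_assoc]; rw [hA]; ring
      exact mul_left_cancel₀ (ne_of_gt hpk) h7
    have h8 : 1 - q = q / m := mul_right_cancel₀ (ne_of_gt hqmpos) h6
    have h9 : (1 - q) * m = q := by
      field_simp at h8; linarith [h8]
    exact final_contra m q hqm h9
  · rintro rfl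
    refine ⟨fun _ => q * ((m:ℝ)+1) / m, fun _ => 1 / ((m:ℝ)+1), ?_, ?_, ?_, ?_⟩
    · intro v
      constructor
      · positivity
      · rw [div_le_one hmpos]; linarith
    · intro w
      constructor
      · positivity
      · rw [div_le_one (by linarith)]; linarith
    · rw [Finset.sum_const, Finset.card_univ, Fintype.card_fun, nsmul_eq_mul]
      push_cast
      field_simp
      simp
    · intro v w
      rcases eq_or_ne w v with rfl | hne
      · simp only [hammingDist_self, if_pos rfl]
        norm_num
        field_simp
        ring
      · have hvw : v ≠ w := fun h => hne h.symm
        have hd : hammingDist v w = 1 := by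
          have hle : hammingDist v w ≤ Fintype.card (Fin 1) := hammingDist_le_card_fintype
          simp at hle
          have : hammingDist v w ≠ 0 := by
            simp [hammingDist_eq_zero]; exact hvw
          omega
        simp only [hd, if_neg hne]
        norm_num
        field_simp
end

section
/- Fix an integer m ≥ 2 (so the alphabet has #𝒜 = m+1 ≥ 3 letters), n = 1, and a real q with 0 < q < m/(m+1). If (p, G) is any noisy-talk representation of the Shannon-type channel ε_S with error probability q on W = Fin 1 → Fin (m+1), then necessarily p(v) = q·(m+1)/m for every v ∈ W and G(w) = 1/(m+1) for every w ∈ W; i.e. the noisy-talk representation is unique. -/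
lemma exists_third_letter (m : ℕ) (hm : 2 ≤ m) (a b : Fin (m+1)) :
    ∃ c : Fin (m+1), c ≠ a ∧ c ≠ b := by
  by_contra h
  push_neg at h
  have hsub : (Finset.univ : Finset (Fin (m+1))) ⊆ {a, b} := by
    intro c _
    rcases eq_or_ne c a with rfl | hca
    · simp
    · simp [h c hca]
  have h1 := Finset.card_le_card hsub
  have h2 : ({a, b} : Finset (Fin (m+1))).card ≤ 2 :=
    (Finset.card_insert_le _ _).trans (by simp)
  simp [Finset.card_univ] at h1
  omega

/-- For an alphabet with `m+1 ≥ 3` letters, `n = 1` and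
`0 < q < m/(m+1)`, any noisy-talk representation `(p, G)` of the Shannon-type channel
is the canonical one: `p ≡ q(m+1)/m` and `G` uniform. -/
theorem noisy_talk_representation_unique
    (m : ℕ) (hm : 2 ≤ m) (q : ℝ)
    (hq : 0 < q) (hq' : q < (m : ℝ) / ((m : ℝ) + 1))
    (p G : (Fin 1 → Fin (m + 1)) → ℝ)
    (hp : ∀ v, p v ∈ Set.Icc (0 : ℝ) 1)
    (hG : ∀ w, G w ∈ Set.Icc (0 : ℝ) 1)
    (hGsum : (∑ w, G w) = 1)
    (hrep : ∀ v w : Fin 1 → Fin (m + 1),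
      (1 - q) ^ (1 - hammingDist v w) * (q / (m : ℝ)) ^ (hammingDist v w)
        = (1 - p v) * (if w = v then 1 else 0) + p v * G w) :
    (∀ v, p v = q * ((m : ℝ) + 1) / (m : ℝ)) ∧
    (∀ w, G w = 1 / ((m : ℝ) + 1)) := by
  have hm0 : (0 : ℝ) < (m : ℝ) := by positivity
  have hqm : (0 : ℝ) < q / m := by positivity
  -- off-diagonal equations
  have key : ∀ v w : Fin 1 → Fin (m + 1), w ≠ v → p v * G w = q / m := by
    intro v w hne
    have hd : hammingDist v w = 1 := by
      have h1 : hammingDist v w ≤ 1 := by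
        simpa using hammingDist_le_card_fintype (x := v) (y := w)
      have h0 : hammingDist v w ≠ 0 := by
        rw [Ne, hammingDist_eq_zero]
        exact fun h => hne h.symm
      omega
    have := hrep v w
    rw [hd] at this
    simp [if_neg hne] at this
    linarith
  have ppos : ∀ v w : Fin 1 → Fin (m + 1), w ≠ v → 0 < p v ∧ 0 < G w := by
    intro v w hne
    have hk := key v w hne
    have h1 := (hp v).1
    have h2 := (hG w).1
    constructor
    · rcases lt_or_eq_of_le h1 with h | h
      · exact h
      · rw [← h] at hk; simp at hk; linarith
    · rcases lt_or_eq_of_le h2 with h | h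
      · exact h
      · rw [← h] at hk; simp at hk; linarith
  -- pick a nonequal v for given w, w'
  have pick : ∀ w w' : Fin 1 → Fin (m + 1), ∃ v : Fin 1 → Fin (m + 1),
      w ≠ v ∧ w' ≠ v := by
    intro w w'
    obtain ⟨c, hc1, hc2⟩ := exists_third_letter m hm (w 0) (w' 0)
    refine ⟨fun _ => c, ?_, ?_⟩
    · exact fun h => hc1 (congrFun h 0).symm
    · exact fun h => hc2 (congrFun h 0).symm
  -- G is constant
  have Gconst : ∀ w w' : Fin 1 → Fin (m + 1), G w = G w' := by
    intro w w'
    obtain ⟨v, h1, h2⟩ := pick w w'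
    have k1 := key v w h1
    have k2 := key v w' h2
    have hpv := (ppos v w h1).1
    have : p v * G w = p v * G w' := by rw [k1, k2]
    exact mul_left_cancel₀ (ne_of_gt hpv) this
  -- value of G
  obtain ⟨w0, hw0⟩ : ∃ w0 : Fin 1 → Fin (m+1), True := ⟨fun _ => 0, trivial⟩
  have hcard : Fintype.card (Fin 1 → Fin (m + 1)) = m + 1 := by simp
  have hGval : ∀ w, G w = 1 / ((m : ℝ) + 1) := by
    intro w
    have hsum : (∑ w', G w') = (m + 1 : ℝ) * G w := by
      have : ∀ w' : Fin 1 → Fin (m+1), G w' = G w := fun w' => Gconst w' w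
      rw [Finset.sum_congr rfl (fun w' _ => this w')]
      simp [Finset.sum_const, Finset.card_univ, hcard]
    rw [hGsum] at hsum
    have hm1 : (m : ℝ) + 1 ≠ 0 := by positivity
    field_simp
    linarith
  refine ⟨?_, hGval⟩
  intro v
  obtain ⟨w, hw, _⟩ := pick v v
  have hk := key v w hw.symm
  rw [hGval w] at hk
  have hm1 : (m : ℝ) + 1 ≠ 0 := by positivity
  field_simp at hk ⊢
  linarith
end

section
/- Let the alphabet be 𝒜 = Fin 2 (so m = 1), n = 1, and let q be a real with 0 < q < 1/2. For every g with q ≤ g ≤ 1−q, the pair (p, G) defined by G(a) = g, G(b) = 1−g, p(a) = q/(1−g), p(b) = q/g (where a, b are the two one-letter words) is a noisy-talk representation of the Shannon-type channel ε_S with error probability q. In particular, since q < 1/2, ε_S admits at least two distinct noisy-talk representations. -/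
/-- A pair `(p, G)` is a noisy-talk representation of the channel `ε`. -/
def IsNoisyTalkRep {W : Type} [Fintype W] [DecidableEq W]
    (ε : W → W → ℝ) (p G : W → ℝ) : Prop :=
  (∀ v, p v ∈ Set.Icc (0 : ℝ) 1) ∧ (∀ w, G w ∈ Set.Icc (0 : ℝ) 1) ∧
  (∑ w, G w) = 1 ∧
  ∀ v w, ε v w = (1 - p v) * (if w = v then 1 else 0) + p v * G w

lemma ext1 {v w : Fin 1 → Fin 2} (h : v 0 = w 0) : v = w := by
  funext i
  rw [Subsingleton.elim i 0, h]

lemma hd (v w : Fin 1 → Fin 2) : hammingDist v w = if v = w then 0 else 1 := by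
  split
  · rename_i h; simp [h]
  · rename_i h
    have h1 : hammingDist v w ≤ 1 := by
      have := hammingDist_le_card_fintype (x := v) (y := w)
      simpa using this
    have h2 : 0 < hammingDist v w := hammingDist_pos.2 h
    omega

lemma fin2_ne {x : Fin 2} (h : x ≠ 0) : x = 1 := by omega

/-- For the binary alphabet (`m = 1`), `n = 1` and `0 < q < 1/2`, every
`g ∈ [q, 1−q]` gives a noisy-talk representation `G(a) = g, G(b) = 1−g,
p(a) = q/(1−g), p(b) = q/g` of the Shannon-type channel; in particular the
Shannon-type channel admits at least two distinct noisy-talk representations. -/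
theorem binary_noisy_talk_representations
    (q : ℝ) (hq0 : 0 < q) (hq1 : q < 1 / 2) :
    (∀ g : ℝ, q ≤ g → g ≤ 1 - q →
      IsNoisyTalkRep
        (fun v w : Fin 1 → Fin 2 =>
          (1 - q) ^ (1 - hammingDist v w) * q ^ (hammingDist v w))
        (fun w => if w 0 = 0 then q / (1 - g) else q / g)
        (fun w => if w 0 = 0 then g else 1 - g)) ∧
    (∃ p₁ G₁ p₂ G₂ : (Fin 1 → Fin 2) → ℝ,
      IsNoisyTalkRep
        (fun v w : Fin 1 → Fin 2 =>
          (1 - q) ^ (1 - hammingDist v w) * q ^ (hammingDist v w)) p₁ G₁ ∧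
      IsNoisyTalkRep
        (fun v w : Fin 1 → Fin 2 =>
          (1 - q) ^ (1 - hammingDist v w) * q ^ (hammingDist v w)) p₂ G₂ ∧
      (p₁ ≠ p₂ ∨ G₁ ≠ G₂)) := by
  have key : ∀ g : ℝ, q ≤ g → g ≤ 1 - q →
      IsNoisyTalkRep
        (fun v w : Fin 1 → Fin 2 =>
          (1 - q) ^ (1 - hammingDist v w) * q ^ (hammingDist v w))
        (fun w => if w 0 = 0 then q / (1 - g) else q / g)
        (fun w => if w 0 = 0 then g else 1 - g) := by
    intro g hgl hgr
    have hg0 : 0 < g := lt_of_lt_of_le hq0 hgl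
    have hg1 : 0 < 1 - g := lt_of_lt_of_le hq0 (by linarith)
    refine ⟨?_, ?_, ?_, ?_⟩
    · intro v
      rcases eq_or_ne (v 0) 0 with h | h
      · simp only [if_pos h, Set.mem_Icc]
        exact ⟨by positivity, by rw [div_le_one hg1]; linarith⟩
      · simp only [if_neg h, Set.mem_Icc]
        exact ⟨by positivity, by rw [div_le_one hg0]; linarith⟩
    · intro w
      rcases eq_or_ne (w 0) 0 with h | h
      · simp only [if_pos h, Set.mem_Icc]; exact ⟨by linarith, by linarith⟩
      · simp only [if_neg h, Set.mem_Icc]; exact ⟨by linarith, by linarith⟩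
    · rw [← Equiv.sum_comp (Equiv.funUnique (Fin 1) (Fin 2)).symm, Fin.sum_univ_two]
      simp [Equiv.funUnique]
    · intro v w
      simp only [hd]
      by_cases hvw : v = w
      · subst hvw
        rcases eq_or_ne (v 0) 0 with h | h
        · simp only [if_pos rfl, if_true, if_pos h, pow_zero, pow_one, mul_one]
          field_simp
          ring
        · simp only [if_pos rfl, if_true, if_neg h, pow_zero, pow_one, mul_one]
          field_simp
          ring
      · have hwv : ¬ w = v := fun h => hvw h.symm
        have hne : v 0 ≠ w 0 := fun h => hvw (ext1 h)
        rcases eq_or_ne (v 0) 0 with h | h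
        · have hw : w 0 ≠ 0 := fun hw0 => hne (by rw [h, hw0])
          simp only [if_neg hvw, if_neg hwv, if_pos h, if_neg hw, pow_zero, pow_one,
            mul_zero, zero_add, one_mul]
          field_simp
          norm_num
        · have hw : w 0 = 0 := by
            by_contra hc
            exact hne (by rw [fin2_ne h, fin2_ne hc])
          simp only [if_neg hvw, if_neg hwv, if_neg h, if_pos hw, pow_zero, pow_one,
            mul_zero, zero_add, one_mul]
          field_simp
          norm_num
  refine ⟨key, ?_⟩
  refine ⟨_, _, _, _, key q le_rfl (by linarith), key (1 - q) (by linarith) le_rfl, Or.inr ?_⟩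
  intro h
  have := congrFun h (fun _ => 0)
  simp at this
  linarith
end

section
/- Let a, d > 0, let b̄ ≥ 0 and 0 ≤ b ≤ b̄, let c ∈ ℝ, and set λ* = a/(a + b̄). Then for every λ₀ with 0 ≤ λ₀ < λ*, the quadratic f(λ) = c + a·d²·(1−λ)² + b·d²·λ² satisfies f(λ₀) ≥ f(λ*) + 2·d²·(a + b̄)·((λ* − λ₀)/2)². In particular, the lower bound 2·d²·(a + b̄)·((λ* − λ₀)/2)² on the gap is independent of b and c. -/
/-- The one-dimensional quadratic comparison: for `a, d > 0`,
`0 ≤ b ≤ b̄`, `λ* = a/(a+b̄)` and any `0 ≤ λ₀ < λ*`, the quadratic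
`f(λ) = c + a d² (1−λ)² + b d² λ²` satisfies
`f(λ₀) ≥ f(λ*) + 2 d² (a+b̄) ((λ*−λ₀)/2)²`, with a gap bound independent of `b, c`. -/
theorem quadratic_gap_bound
    (a d bbar b c lam0 : ℝ)
    (ha : 0 < a) (hd : 0 < d) (hbbar : 0 ≤ bbar)
    (hb0 : 0 ≤ b) (hb : b ≤ bbar)
    (hlam0 : 0 ≤ lam0) (hlt : lam0 < a / (a + bbar)) :
    c + a * d ^ 2 * (1 - lam0) ^ 2 + b * d ^ 2 * lam0 ^ 2 ≥
      (c + a * d ^ 2 * (1 - a / (a + bbar)) ^ 2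
        + b * d ^ 2 * (a / (a + bbar)) ^ 2)
      + 2 * d ^ 2 * (a + bbar) * ((a / (a + bbar) - lam0) / 2) ^ 2 := by
  have hs : 0 < a + bbar := by linarith
  set L := a / (a + bbar) with hLdef
  have hL : L * (a + bbar) = a := div_mul_cancel₀ a hs.ne'
  have hL0 : 0 < L := lt_of_le_of_lt hlam0 hlt
  have ht : 0 < L - lam0 := sub_pos.mpr hlt
  have hd2 : 0 < d ^ 2 := pow_pos hd 2
  have key : a * (2 - lam0 - L) - b * (lam0 + L) ≥ (a + bbar) * (L - lam0) := by
    nlinarith [mul_nonneg (sub_nonneg.mpr hb) (by linarith : (0:ℝ) ≤ lam0 + L)]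
  have main : d ^ 2 * ((L - lam0) * (a * (2 - lam0 - L) - b * (lam0 + L)))
      ≥ d ^ 2 * ((L - lam0) * ((a + bbar) * (L - lam0))) := by
    apply mul_le_mul_of_nonneg_left _ hd2.le
    exact mul_le_mul_of_nonneg_left key ht.le
  nlinarith [main, mul_pos hd2 (mul_pos hs (mul_pos ht ht))]
end
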